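/- Suppose $A \in \mathbb{C}^{m\times n}$ has the weighted robust null space property of order $K$ with constants $0 < \rho < 1$, $\tau > 0$: for all $\bm{z}$ and all $S$ with $|S|_{\bm{w}} \leq K$, $\|\bm{z}_S\|_2 \leq \frac{\rho}{\sqrt{K}}\|\bm{z}_{S^c}\|_{1,\bm{w}} + \tau\|A\bm{z}\|_2$. Let $\hat{\bm{x}}$ minimize $\|\bm{z}\|_{1,\bm{w}} + \lambda\|A\bm{z}-\bm{y}\|_2$ over $\bm{z} \in \mathbb{C}^n$ with $\lambda \geq \frac{2\tau\sqrt{K}}{1+\rho}$, where $\bm{y} = A\bm{x} + \bm{e}$. Then $\|\bm{x} - \hat{\bm{x}}\|_{1,\bm{w}} \leq \frac{2(1+\rho)}{1-\rho}\sigma_K(\bm{x})_{1,\bm{w}} + \frac{(1+\rho)\lambda + 2\tau\sqrt{K}}{1-\rho}\|\bm{e}\|_2$. -/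

import Mathlib

open scoped BigOperators

/-- Weighted best `K`-term (weighted cardinality) approximation error
`σ_K(z)_{1,w} = min { ‖z - z'‖_{1,w} : |supp z'|_w ≤ K }`. -/
noncomputable def sigmaK {n : ℕ} (w : Fin n → ℝ) (K : ℝ) (z : Fin n → ℂ) : ℝ :=
  sInf {t : ℝ | ∃ S : Finset (Fin n),
    (∑ i ∈ S, (w i) ^ 2) ≤ K ∧ t = ∑ i ∈ Sᶜ, w i * ‖z i‖}

private lemma l2_tri {m : ℕ} (f g : Fin m → ℂ) :
    Real.sqrt (∑ i, ‖f i + g i‖ ^ 2) ≤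
      Real.sqrt (∑ i, ‖f i‖ ^ 2) + Real.sqrt (∑ i, ‖g i‖ ^ 2) := by
  have h := norm_add_le ((WithLp.equiv 2 (Fin m → ℂ)).symm f)
    ((WithLp.equiv 2 (Fin m → ℂ)).symm g)
  rw [EuclideanSpace.norm_eq, EuclideanSpace.norm_eq, EuclideanSpace.norm_eq] at h
  simpa using h

/-- Weighted `ℓ¹` error bound for the weighted square-root LASSO decoder under the
weighted robust null space property of order `K`, with tuning parameter
`λ ≥ 2τ√K/(1+ρ)`. -/
theorem wsrlasso_l1_error_bound {m n : ℕ} (A : Matrix (Fin m) (Fin n) ℂ)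
    (w : Fin n → ℝ) (hw : ∀ i, 0 < w i) (K ρ τ lam : ℝ)
    (hK : 0 < K) (hρ : 0 < ρ) (hρ1 : ρ < 1) (hτ : 0 < τ)
    (hNSP : ∀ z : Fin n → ℂ, ∀ S : Finset (Fin n), (∑ i ∈ S, (w i) ^ 2) ≤ K →
      Real.sqrt (∑ i ∈ S, ‖z i‖ ^ 2) ≤
        ρ / Real.sqrt K * (∑ i ∈ Sᶜ, w i * ‖z i‖)
          + τ * Real.sqrt (∑ k, ‖(A.mulVec z) k‖ ^ 2))
    (hlam : 2 * τ * Real.sqrt K / (1 + ρ) ≤ lam)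
    (x xh : Fin n → ℂ) (e y : Fin m → ℂ) (hy : y = A.mulVec x + e)
    (hmin : ∀ z : Fin n → ℂ,
      (∑ j, w j * ‖xh j‖) + lam * Real.sqrt (∑ i, ‖(A.mulVec xh - y) i‖ ^ 2) ≤
        (∑ j, w j * ‖z j‖) + lam * Real.sqrt (∑ i, ‖(A.mulVec z - y) i‖ ^ 2)) :
    (∑ j, w j * ‖x j - xh j‖) ≤
      2 * (1 + ρ) / (1 - ρ) * sigmaK w K x
        + ((1 + ρ) * lam + 2 * τ * Real.sqrt K) / (1 - ρ) *
            Real.sqrt (∑ i, ‖e i‖ ^ 2) := by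
  set E := Real.sqrt (∑ i, ‖e i‖ ^ 2) with hEdef
  set R := Real.sqrt (∑ i, ‖(A.mulVec xh - y) i‖ ^ 2) with hRdef
  have hE0 : 0 ≤ E := Real.sqrt_nonneg _
  have hR0 : 0 ≤ R := Real.sqrt_nonneg _
  have hsK : 0 < Real.sqrt K := Real.sqrt_pos.mpr hK
  set t2 := τ * Real.sqrt K with ht2
  have ht20 : 0 < t2 := mul_pos hτ hsK
  set h : Fin n → ℂ := fun i => xh i - x i with hh
  set L := ∑ j, w j * ‖x j - xh j‖ with hL
  -- L = ∑ w ‖h‖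
  have hLh : L = ∑ j, w j * ‖h j‖ := by
    simp only [hL, hh]
    exact Finset.sum_congr rfl fun i _ => by rw [norm_sub_rev]
  -- A h = (A xh - y) + e
  have hAh : A.mulVec h = fun k => (A.mulVec xh - y) k + e k := by
    funext k
    have h1 : A.mulVec h = A.mulVec xh - A.mulVec x := Matrix.mulVec_sub A xh x
    rw [h1]
    have h2 : A.mulVec x = y - e := by rw [hy]; ring
    rw [h2]
    simp
    ring
  -- N ≤ R + E
  have hN : Real.sqrt (∑ k, ‖(A.mulVec h) k‖ ^ 2) ≤ R + E := by
    rw [hAh]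
    exact l2_tri _ _
  -- optimality at z = x
  have hopt : (∑ j, w j * ‖xh j‖) - (∑ j, w j * ‖x j‖) ≤ lam * E - lam * R := by
    have hmx := hmin x
    have hxy : A.mulVec x - y = fun i => -(e i) := by
      funext i; rw [hy]; simp
    rw [hxy] at hmx
    simp only [norm_neg] at hmx
    rw [← hEdef] at hmx
    linarith
  -- 2τ√K ≤ (1+ρ)lam
  have hlam' : 2 * t2 ≤ (1 + ρ) * lam := by
    rw [div_le_iff₀ (by linarith : (0:ℝ) < 1 + ρ)] at hlam
    nlinarith
  -- key per-S bound
  have key : ∀ S : Finset (Fin n), (∑ i ∈ S, (w i) ^ 2) ≤ K →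
      L ≤ 2 * (1 + ρ) / (1 - ρ) * (∑ i ∈ Sᶜ, w i * ‖x i‖)
        + ((1 + ρ) * lam + 2 * t2) / (1 - ρ) * E := by
    intro S hS
    set a := ∑ i ∈ S, w i * ‖h i‖ with ha
    set b := ∑ i ∈ Sᶜ, w i * ‖h i‖ with hb
    set σ := ∑ i ∈ Sᶜ, w i * ‖x i‖ with hσ
    have hσ0 : 0 ≤ σ := Finset.sum_nonneg fun i _ => mul_nonneg (hw i).le (norm_nonneg _)
    have hLab : L = a + b := by
      rw [hLh, ha, hb, Finset.sum_add_sum_compl]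
    -- Cauchy-Schwarz
    have hcs : a ≤ Real.sqrt (∑ i ∈ S, (w i) ^ 2) * Real.sqrt (∑ i ∈ S, ‖h i‖ ^ 2) :=
      Real.sum_mul_le_sqrt_mul_sqrt S w (fun i => ‖h i‖)
    have hQ0 : 0 ≤ Real.sqrt (∑ i ∈ S, ‖h i‖ ^ 2) := Real.sqrt_nonneg _
    have hcs2 : a ≤ Real.sqrt K * Real.sqrt (∑ i ∈ S, ‖h i‖ ^ 2) := by
      refine hcs.trans (mul_le_mul_of_nonneg_right ?_ hQ0)
      exact Real.sqrt_le_sqrt hS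
    -- NSP applied to h
    have hnsp := hNSP h S hS
    have hi : a ≤ ρ * b + t2 * (R + E) := by
      have h1 : Real.sqrt K * Real.sqrt (∑ i ∈ S, ‖h i‖ ^ 2) ≤
          Real.sqrt K * (ρ / Real.sqrt K * b + τ * Real.sqrt (∑ k, ‖(A.mulVec h) k‖ ^ 2)) :=
        mul_le_mul_of_nonneg_left hnsp hsK.le
      have h2 : Real.sqrt K * (ρ / Real.sqrt K * b) = ρ * b := by
        field_simp
      have h3 : τ * Real.sqrt (∑ k, ‖(A.mulVec h) k‖ ^ 2) ≤ τ * (R + E) :=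
        mul_le_mul_of_nonneg_left hN hτ.le
      calc a ≤ Real.sqrt K * Real.sqrt (∑ i ∈ S, ‖h i‖ ^ 2) := hcs2
        _ ≤ Real.sqrt K * (ρ / Real.sqrt K * b + τ * Real.sqrt (∑ k, ‖(A.mulVec h) k‖ ^ 2)) := h1
        _ = ρ * b + Real.sqrt K * (τ * Real.sqrt (∑ k, ‖(A.mulVec h) k‖ ^ 2)) := by
            rw [mul_add, h2]
        _ ≤ ρ * b + t2 * (R + E) := by
            have h4 := mul_le_mul_of_nonneg_left h3 hsK.le
            rw [ht2]; nlinarith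
    -- cone-type bound
    have hcone : b ≤ ((∑ j, w j * ‖xh j‖) - (∑ j, w j * ‖x j‖)) + 2 * σ + a := by
      have hb1 : b ≤ (∑ i ∈ Sᶜ, w i * ‖xh i‖) + σ := by
        rw [hb, hσ, ← Finset.sum_add_distrib]
        refine Finset.sum_le_sum fun i _ => ?_
        rw [← mul_add]
        exact mul_le_mul_of_nonneg_left (norm_sub_le _ _) (hw i).le
      have ha1 : (∑ i ∈ S, w i * ‖x i‖) ≤ (∑ i ∈ S, w i * ‖xh i‖) + a := by
        rw [ha, ← Finset.sum_add_distrib]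
        refine Finset.sum_le_sum fun i _ => ?_
        rw [← mul_add]
        refine mul_le_mul_of_nonneg_left ?_ (hw i).le
        calc ‖x i‖ = ‖xh i - (xh i - x i)‖ := by ring_nf
          _ ≤ ‖xh i‖ + ‖xh i - x i‖ := norm_sub_le _ _
      have hsplit1 : (∑ i ∈ S, w i * ‖x i‖) + σ = ∑ j, w j * ‖x j‖ := by
        rw [hσ]; exact Finset.sum_add_sum_compl S _
      have hsplit2 : (∑ i ∈ S, w i * ‖xh i‖) + (∑ i ∈ Sᶜ, w i * ‖xh i‖)
          = ∑ j, w j * ‖xh j‖ := Finset.sum_add_sum_compl S _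
      linarith
    -- combine
    have key1 : (1 - ρ) * b ≤ (lam + t2) * E + (t2 - lam) * R + 2 * σ := by
      nlinarith [hi, hcone, hopt]
    rw [div_mul_eq_mul_div, div_mul_eq_mul_div, ← add_div,
      le_div_iff₀ (by linarith : (0:ℝ) < 1 - ρ)]
    have hint1 : (1 - ρ) * a ≤ (1 - ρ) * (ρ * b + t2 * (R + E)) :=
      mul_le_mul_of_nonneg_left hi (by linarith)
    have hint2 : (1 + ρ) * ((1 - ρ) * b) ≤ (1 + ρ) * ((lam + t2) * E + (t2 - lam) * R + 2 * σ) :=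
      mul_le_mul_of_nonneg_left key1 (by linarith)
    have hint3 : (2 * t2 - (1 + ρ) * lam) * R ≤ 0 :=
      mul_nonpos_of_nonpos_of_nonneg (by linarith) hR0
    rw [hLab]
    linarith [hint1, hint2, hint3]
  -- finish via the infimum
  have hcpos : (0:ℝ) < 2 * (1 + ρ) / (1 - ρ) :=
    div_pos (by linarith) (by linarith)
  have h2t : 2 * t2 = 2 * τ * Real.sqrt K := by rw [ht2]; ring
  have hne : {t : ℝ | ∃ S : Finset (Fin n),
      (∑ i ∈ S, (w i) ^ 2) ≤ K ∧ t = ∑ i ∈ Sᶜ, w i * ‖x i‖}.Nonempty :=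
    ⟨∑ i ∈ (∅ : Finset (Fin n))ᶜ, w i * ‖x i‖, ∅, by simpa using hK.le, rfl⟩
  have hlb : (L - ((1 + ρ) * lam + 2 * t2) / (1 - ρ) * E) / (2 * (1 + ρ) / (1 - ρ)) ≤
      sigmaK w K x := by
    refine le_csInf hne ?_
    rintro t ⟨S, hS, rfl⟩
    rw [div_le_iff₀ hcpos]
    have hk := key S hS
    linarith
  rw [div_le_iff₀ hcpos] at hlb
  rw [← h2t]
  linarith
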